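/- arXiv:2601.11730 — 2 statements merged into one kernel-verified Lean document; each statement's English description precedes it below -/
import Mathlib

section
/- Let d ≥ 2 be an integer, λ ∈ ℂ, and let f₊, f₋ : (−1,1) → ℂ be differentiable. Define φ₊(θ) = cos(θ/2) · f₊(cos θ) and φ₋(θ) = sin(θ/2) · f₋(cos θ) for θ ∈ (0,π). Then (φ₊, φ₋) satisfies the zonal Dirac eigenvalue system with eigenvalue λ if and only if (f₊, f₋) satisfies the Jacobi-type first-order system with parameter λ. -/
/-- `(φ₊, φ₋)` satisfies the zonal Dirac eigenvalue system with eigenvalue `λ`: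
for all `θ ∈ (0, π)`,
`φ₋'(θ) + ((d−1)/2)(cot θ + 1/sin θ) φ₋(θ) = λ φ₊(θ)` and
`φ₊'(θ) + ((d−1)/2)(cot θ − 1/sin θ) φ₊(θ) = −λ φ₋(θ)`. -/
def ZonalDiracSystem (d : ℕ) (lam : ℂ) (φp φm : ℝ → ℂ) : Prop :=
  ∀ θ ∈ Set.Ioo (0 : ℝ) Real.pi,
    deriv φm θ + ((d : ℂ) - 1) / 2
        * ((Real.cos θ / Real.sin θ + 1 / Real.sin θ : ℝ) : ℂ) * φm θ = lam * φp θ ∧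
    deriv φp θ + ((d : ℂ) - 1) / 2
        * ((Real.cos θ / Real.sin θ - 1 / Real.sin θ : ℝ) : ℂ) * φp θ = -lam * φm θ

/-- `(f₊, f₋)` satisfies the Jacobi-type first-order system with parameter `λ`:
for all `z ∈ (−1,1)`, `(z−1)f₋'(z) + (d/2)f₋(z) = λ f₊(z)` and
`(z+1)f₊'(z) + (d/2)f₊(z) = λ f₋(z)`. -/
def JacobiSystem (d : ℕ) (lam : ℂ) (fp fm : ℝ → ℂ) : Prop :=
  ∀ z ∈ Set.Ioo (-1 : ℝ) 1,
    ((z : ℂ) - 1) * deriv fm z + (d : ℂ) / 2 * fm z = lam * fp z ∧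
    ((z : ℂ) + 1) * deriv fp z + (d : ℂ) / 2 * fp z = lam * fm z

lemma key (d : ℕ) (lam : ℂ) (fp fm : ℝ → ℂ) (θ : ℝ) (hθ : θ ∈ Set.Ioo (0:ℝ) Real.pi)
    (hp : DifferentiableAt ℝ fp (Real.cos θ)) (hm : DifferentiableAt ℝ fm (Real.cos θ)) :
    (deriv (fun θ => (Real.sin (θ / 2) : ℂ) * fm (Real.cos θ)) θ + ((d : ℂ) - 1) / 2
        * ((Real.cos θ / Real.sin θ + 1 / Real.sin θ : ℝ) : ℂ)
        * ((Real.sin (θ / 2) : ℂ) * fm (Real.cos θ))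
      = lam * ((Real.cos (θ / 2) : ℂ) * fp (Real.cos θ)) ∧
     deriv (fun θ => (Real.cos (θ / 2) : ℂ) * fp (Real.cos θ)) θ + ((d : ℂ) - 1) / 2
        * ((Real.cos θ / Real.sin θ - 1 / Real.sin θ : ℝ) : ℂ)
        * ((Real.cos (θ / 2) : ℂ) * fp (Real.cos θ))
      = -lam * ((Real.sin (θ / 2) : ℂ) * fm (Real.cos θ)))
    ↔ (((Real.cos θ : ℂ) - 1) * deriv fm (Real.cos θ)
          + (d : ℂ) / 2 * fm (Real.cos θ) = lam * fp (Real.cos θ) ∧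
       ((Real.cos θ : ℂ) + 1) * deriv fp (Real.cos θ)
          + (d : ℂ) / 2 * fp (Real.cos θ) = lam * fm (Real.cos θ)) := by
  obtain ⟨h0, hπ⟩ := hθ
  have hs : 0 < Real.sin (θ / 2) :=
    Real.sin_pos_of_pos_of_lt_pi (by linarith) (by linarith [Real.pi_pos])
  have hc : 0 < Real.cos (θ / 2) :=
    Real.cos_pos_of_mem_Ioo ⟨by linarith [Real.pi_pos], by linarith⟩
  set s := Real.sin (θ / 2) with hs_def
  set c := Real.cos (θ / 2) with hc_def
  set z := Real.cos θ with hz_def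
  have hS : Real.sin θ = 2 * s * c := by
    rw [show θ = 2 * (θ / 2) by ring, Real.sin_two_mul]
  have hZ : z = 1 - 2 * s ^ 2 := by
    rw [hz_def, show θ = 2 * (θ / 2) by ring, Real.cos_two_mul']
    linear_combination Real.sin_sq_add_cos_sq (θ / 2)
  have hZ2 : z = 2 * c ^ 2 - 1 := by
    rw [hz_def, show θ = 2 * (θ / 2) by ring, Real.cos_two_mul]
  have hsne : (s : ℂ) ≠ 0 := by exact_mod_cast hs.ne'
  have hcne : (c : ℂ) ≠ 0 := by exact_mod_cast hc.ne'
  have hSne : Real.sin θ ≠ 0 := by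
    rw [hS]; positivity
  -- the coefficient simplifications
  have hco1 : ((z / Real.sin θ + 1 / Real.sin θ : ℝ) : ℂ) = (c : ℂ) / s := by
    have : (z / Real.sin θ + 1 / Real.sin θ : ℝ) = c / s := by
      rw [hS, hZ2]; field_simp; ring
    rw [this]; push_cast; ring
  have hco2 : ((z / Real.sin θ - 1 / Real.sin θ : ℝ) : ℂ) = -((s : ℂ) / c) := by
    have : (z / Real.sin θ - 1 / Real.sin θ : ℝ) = -(s / c) := by
      rw [hS, hZ]; field_simp; ring
    rw [this]; push_cast; ring
  -- derivatives
  have dhalf : HasDerivAt (fun t : ℝ => t / 2) (1 / 2) θ := by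
    simpa using (hasDerivAt_id θ).div_const 2
  have dS : HasDerivAt (fun t : ℝ => ((Real.sin (t / 2) : ℝ) : ℂ)) ((c : ℂ) * (1 / 2)) θ := by
    have h := ((Real.hasDerivAt_sin (θ / 2)).comp θ dhalf).ofReal_comp
    simp only [Function.comp_def] at h
    convert h using 1
    rw [Complex.ofReal_mul, hc_def]; norm_num [Complex.ofReal_cos]
  have dC : HasDerivAt (fun t : ℝ => ((Real.cos (t / 2) : ℝ) : ℂ)) (-(s : ℂ) * (1 / 2)) θ := by
    have h := ((Real.hasDerivAt_cos (θ / 2)).comp θ dhalf).ofReal_comp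
    simp only [Function.comp_def] at h
    convert h using 1
    rw [Complex.ofReal_mul, Complex.ofReal_neg, hs_def]; norm_num [Complex.ofReal_sin]
  have dcos : HasDerivAt Real.cos (-Real.sin θ) θ := Real.hasDerivAt_cos θ
  have dfm : HasDerivAt (fun t : ℝ => fm (Real.cos t)) ((-Real.sin θ : ℝ) • deriv fm z) θ :=
    (hm.hasDerivAt).scomp θ dcos
  have dfp : HasDerivAt (fun t : ℝ => fp (Real.cos t)) ((-Real.sin θ : ℝ) • deriv fp z) θ :=
    (hp.hasDerivAt).scomp θ dcos
  have Dm : deriv (fun t => (Real.sin (t / 2) : ℂ) * fm (Real.cos t)) θ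
      = (c : ℂ) * (1 / 2) * fm z + (s : ℂ) * ((-Real.sin θ : ℝ) • deriv fm z) :=
    (dS.mul dfm).deriv
  have Dp : deriv (fun t => (Real.cos (t / 2) : ℂ) * fp (Real.cos t)) θ
      = -(s : ℂ) * (1 / 2) * fp z + (c : ℂ) * ((-Real.sin θ : ℝ) • deriv fp z) :=
    (dC.mul dfp).deriv
  have hSc : ((Real.sin θ : ℝ) : ℂ) = 2 * s * c := by exact_mod_cast congrArg Complex.ofReal hS
  have hZc : ((z : ℝ) : ℂ) = 1 - 2 * (s : ℂ) ^ 2 := by exact_mod_cast congrArg Complex.ofReal hZ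
  have hZc2 : ((z : ℝ) : ℂ) = 2 * (c : ℂ) ^ 2 - 1 := by
    exact_mod_cast congrArg Complex.ofReal hZ2
  have L1 : deriv (fun t => (Real.sin (t / 2) : ℂ) * fm (Real.cos t)) θ + ((d : ℂ) - 1) / 2
        * ((z / Real.sin θ + 1 / Real.sin θ : ℝ) : ℂ) * ((s : ℂ) * fm z)
      = (c : ℂ) * ((((z : ℝ) : ℂ) - 1) * deriv fm z + (d : ℂ) / 2 * fm z) := by
    rw [Dm, Complex.real_smul, hco1, Complex.ofReal_neg, hSc, hZc]
    field_simp
    ring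
  have L2 : deriv (fun t => (Real.cos (t / 2) : ℂ) * fp (Real.cos t)) θ + ((d : ℂ) - 1) / 2
        * ((z / Real.sin θ - 1 / Real.sin θ : ℝ) : ℂ) * ((c : ℂ) * fp z)
      = -((s : ℂ) * ((((z : ℝ) : ℂ) + 1) * deriv fp z + (d : ℂ) / 2 * fp z)) := by
    rw [Dp, Complex.real_smul, hco2, Complex.ofReal_neg, hSc, hZc2]
    field_simp
    ring
  have I1 : (deriv (fun t => (Real.sin (t / 2) : ℂ) * fm (Real.cos t)) θ + ((d : ℂ) - 1) / 2
        * ((z / Real.sin θ + 1 / Real.sin θ : ℝ) : ℂ) * ((s : ℂ) * fm z)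
      = lam * ((c : ℂ) * fp z))
      ↔ ((((z : ℝ) : ℂ) - 1) * deriv fm z + (d : ℂ) / 2 * fm z = lam * fp z) := by
    rw [L1, show lam * ((c : ℂ) * fp z) = (c : ℂ) * (lam * fp z) by ring]
    exact mul_right_inj' hcne
  have I2 : (deriv (fun t => (Real.cos (t / 2) : ℂ) * fp (Real.cos t)) θ + ((d : ℂ) - 1) / 2
        * ((z / Real.sin θ - 1 / Real.sin θ : ℝ) : ℂ) * ((c : ℂ) * fp z)
      = -lam * ((s : ℂ) * fm z))
      ↔ ((((z : ℝ) : ℂ) + 1) * deriv fp z + (d : ℂ) / 2 * fp z = lam * fm z) := by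
    rw [L2, show -lam * ((s : ℂ) * fm z) = -((s : ℂ) * (lam * fm z)) by ring, neg_inj]
    exact mul_right_inj' hsne
  exact and_congr I1 I2

/-- Let `d ≥ 2`, `λ ∈ ℂ`, and `f₊, f₋` differentiable on `(−1,1)`. Define
`φ₊(θ) = cos(θ/2) f₊(cos θ)` and `φ₋(θ) = sin(θ/2) f₋(cos θ)`. Then `(φ₊, φ₋)` satisfies the
zonal Dirac eigenvalue system with eigenvalue `λ` iff `(f₊, f₋)` satisfies the Jacobi-type
first-order system with parameter `λ`. -/
theorem zonalDiracSystem_iff_jacobiSystem (d : ℕ) (hd : 2 ≤ d) (lam : ℂ) (fp fm : ℝ → ℂ)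
    (hfp : ∀ z ∈ Set.Ioo (-1 : ℝ) 1, DifferentiableAt ℝ fp z)
    (hfm : ∀ z ∈ Set.Ioo (-1 : ℝ) 1, DifferentiableAt ℝ fm z) :
    ZonalDiracSystem d lam
        (fun θ => (Real.cos (θ / 2) : ℂ) * fp (Real.cos θ))
        (fun θ => (Real.sin (θ / 2) : ℂ) * fm (Real.cos θ))
      ↔ JacobiSystem d lam fp fm := by
  constructor
  · intro h z hz
    set θ := Real.arccos z with hθ_def
    have hθ : θ ∈ Set.Ioo (0:ℝ) Real.pi :=
      ⟨Real.arccos_pos.mpr hz.2, (Real.arccos_le_pi z).lt_of_ne (fun hh => absurd (Real.arccos_eq_pi.mp hh) (not_le.mpr hz.1))⟩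
    have hcz : Real.cos θ = z := Real.cos_arccos hz.1.le hz.2.le
    have h' := (key d lam fp fm θ hθ (by rw [hcz]; exact hfp z hz)
      (by rw [hcz]; exact hfm z hz)).mp (h θ hθ)
    rw [hcz] at h'
    exact h'
  · intro h θ hθ
    have hz : Real.cos θ ∈ Set.Ioo (-1:ℝ) 1 := by
      constructor
      · have := Real.cos_lt_cos_of_nonneg_of_le_pi hθ.1.le le_rfl hθ.2
        simpa [Real.cos_pi] using this
      · have := Real.cos_lt_cos_of_nonneg_of_le_pi le_rfl hθ.2.le hθ.1
        simpa [Real.cos_zero] using this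
    exact (key d lam fp fm θ hθ (hfp _ hz) (hfm _ hz)).mpr (h _ hz)
end

section
/- Let (Ω, F, P) be a probability space, and let a, b, c, C, C₀ be positive real numbers with b > a/2. Let (X_N)_{N≥1} be a sequence of real-valued random variables such that: (i) for every N ≥ 1, X_N ≥ −C₀ N^a almost surely; (ii) for all integers 1 ≤ M ≤ N and all λ > 0, P(|X_N − X_M| > λ) ≤ C · exp(−c · M^b · λ^{1/2}). Then for every real r ≥ 1, sup_{N≥1} E[exp(−r X_N)] < ∞. -/
open MeasureTheory
open scoped ENNReal

set_option maxHeartbeats 2000000 in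
/-- Let `a, b, c, C, C₀ > 0` with `b > a/2`, and `(X_N)_{N ≥ 1}` real random variables with
`X_N ≥ −C₀ N^a` a.s. and `P(|X_N − X_M| > t) ≤ C exp(−c M^b t^{1/2})` for `1 ≤ M ≤ N`,
`t > 0`. Then for every `r ≥ 1`, `sup_{N ≥ 1} E[exp(−r X_N)] < ∞`. -/
theorem uniform_exponential_moment_bound {Ω : Type*} [MeasurableSpace Ω] (P : Measure Ω)
    [IsProbabilityMeasure P] (a b c C C₀ : ℝ)
    (ha : 0 < a) (hb : 0 < b) (hc : 0 < c) (hC : 0 < C) (hC₀ : 0 < C₀) (hab : a / 2 < b)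
    (X : ℕ → Ω → ℝ) (hX : ∀ N, Measurable (X N))
    (hlow : ∀ N : ℕ, 1 ≤ N → ∀ᵐ ω ∂P, -C₀ * (N : ℝ) ^ a ≤ X N ω)
    (htail : ∀ M N : ℕ, 1 ≤ M → M ≤ N → ∀ t : ℝ, 0 < t →
        P {ω | t < |X N ω - X M ω|}
          ≤ ENNReal.ofReal (C * Real.exp (-c * (M : ℝ) ^ b * t ^ ((1 : ℝ) / 2)))) :
    ∀ r : ℝ, 1 ≤ r → ∃ B : ENNReal, B ≠ ⊤ ∧
      ∀ N : ℕ, 1 ≤ N → ∫⁻ ω, ENNReal.ofReal (Real.exp (-r * X N ω)) ∂P ≤ B := by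
  intro r hr
  have hr0 : (0:ℝ) < r := lt_of_lt_of_le one_pos hr
  set θ : ℝ := b / a + 1 / 2 with hθdef
  have hθ1 : 1 < θ := by
    have h12 : 1 / 2 < b / a := by rw [lt_div_iff₀ ha]; linarith
    rw [hθdef]; linarith
  set c₂ : ℝ := c * (2:ℝ) ^ (-b) * (2 * C₀) ^ (-(b / a)) * (2:ℝ) ^ (-((1:ℝ) / 2)) with hc₂def
  have hc₂ : 0 < c₂ := by rw [hc₂def]; positivity
  set A₀ : ℝ := 2 * C₀ * (2:ℝ) ^ a with hA₀def
  have hA₀ : 0 < A₀ := by rw [hA₀def]; positivity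
  -- the key uniform tail estimate
  have tail : ∀ N : ℕ, 1 ≤ N → ∀ lam : ℝ, A₀ ≤ lam →
      P {ω | lam < -X N ω} ≤ ENNReal.ofReal (C * Real.exp (-(c₂ * lam ^ θ))) := by
    intro N hN lam hlam
    have hlam0 : 0 < lam := lt_of_lt_of_le hA₀ hlam
    have hx0 : 0 < lam / (2 * C₀) := by positivity
    set s : ℝ := (lam / (2 * C₀)) ^ (a⁻¹) with hsdef
    have hs0 : 0 < s := Real.rpow_pos_of_pos hx0 _
    have hs2 : 2 ≤ s := by
      have h2a : (2:ℝ) ^ a ≤ lam / (2 * C₀) := by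
        rw [le_div_iff₀ (by positivity)]
        calc (2:ℝ) ^ a * (2 * C₀) = A₀ := by rw [hA₀def]; ring
          _ ≤ lam := hlam
      calc (2:ℝ) = ((2:ℝ) ^ a) ^ (a⁻¹) := by
            rw [← Real.rpow_mul (by norm_num : (0:ℝ) ≤ 2), mul_inv_cancel₀ ha.ne',
              Real.rpow_one]
        _ ≤ s := Real.rpow_le_rpow (by positivity) h2a (by positivity)
    set M : ℕ := ⌊s⌋₊ with hMdef
    have hM1 : 1 ≤ M := Nat.le_floor (by push_cast; linarith)
    have hMs : (M:ℝ) ≤ s := Nat.floor_le hs0.le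
    have hsM : s / 2 ≤ (M:ℝ) := by
      have h := Nat.sub_one_lt_floor s
      rw [← hMdef] at h
      linarith
    have hsa : s ^ a = lam / (2 * C₀) := by
      rw [hsdef, ← Real.rpow_mul hx0.le, inv_mul_cancel₀ ha.ne', Real.rpow_one]
    have hCM : C₀ * (M:ℝ) ^ a ≤ lam / 2 := by
      have h1 : (M:ℝ) ^ a ≤ s ^ a := Real.rpow_le_rpow (Nat.cast_nonneg M) hMs ha.le
      rw [hsa] at h1
      have h2 : C₀ * (lam / (2 * C₀)) = lam / 2 := by field_simp
      nlinarith
    by_cases hMN : M ≤ N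
    · have hnull : P {ω | X M ω < -C₀ * (M:ℝ) ^ a} = 0 := by
        have h := hlow M hM1
        rw [ae_iff] at h
        simpa [not_le] using h
      have hsub : {ω | lam < -X N ω} ⊆
          {ω | lam / 2 < |X N ω - X M ω|} ∪ {ω | X M ω < -C₀ * (M:ℝ) ^ a} := by
        intro ω hω
        by_cases h2 : X M ω < -C₀ * (M:ℝ) ^ a
        · exact Or.inr h2
        · left
          push_neg at h2
          simp only [Set.mem_setOf_eq] at hω ⊢
          have h3 : lam / 2 < -(X N ω - X M ω) := by nlinarith
          exact lt_of_lt_of_le h3 (neg_le_abs _)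
      have key : c₂ * lam ^ θ ≤ c * (M:ℝ) ^ b * (lam / 2) ^ ((1:ℝ) / 2) := by
        have hMb : (s / 2) ^ b ≤ (M:ℝ) ^ b := Real.rpow_le_rpow (by positivity) hsM hb.le
        have e1 : (s / 2) ^ b = s ^ b / (2:ℝ) ^ b := Real.div_rpow hs0.le (by norm_num : (0:ℝ) ≤ 2) b
        have e2 : s ^ b = lam ^ (b / a) / (2 * C₀) ^ (b / a) := by
          rw [hsdef, ← Real.rpow_mul hx0.le,
            show a⁻¹ * b = b / a by rw [div_eq_mul_inv]; ring]
          exact Real.div_rpow hlam0.le (by positivity : (0:ℝ) ≤ 2*C₀) (b/a)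
        have e3 : (lam / 2) ^ ((1:ℝ) / 2) = lam ^ ((1:ℝ) / 2) / (2:ℝ) ^ ((1:ℝ) / 2) :=
          Real.div_rpow hlam0.le (by norm_num : (0:ℝ) ≤ 2) ((1:ℝ)/2)
        have e4 : lam ^ θ = lam ^ (b / a) * lam ^ ((1:ℝ) / 2) := by
          rw [hθdef, Real.rpow_add hlam0]
        have hle : c * (s / 2) ^ b * (lam / 2) ^ ((1:ℝ) / 2)
            ≤ c * (M:ℝ) ^ b * (lam / 2) ^ ((1:ℝ) / 2) := by
          apply mul_le_mul_of_nonneg_right (mul_le_mul_of_nonneg_left hMb hc.le)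
          positivity
        refine le_trans (le_of_eq ?_) hle
        have d1 : (0:ℝ) < (2:ℝ) ^ b := by positivity
        have d2 : (0:ℝ) < (2 * C₀) ^ (b / a) := by positivity
        have d3 : (0:ℝ) < (2:ℝ) ^ ((1:ℝ) / 2) := by positivity
        rw [hc₂def, e4, e1, e2, e3, Real.rpow_neg (by norm_num : (0:ℝ) ≤ 2),
          Real.rpow_neg (by positivity : (0:ℝ) ≤ 2 * C₀),
          Real.rpow_neg (by norm_num : (0:ℝ) ≤ 2)]
        field_simp
      calc P {ω | lam < -X N ω}
          ≤ P ({ω | lam / 2 < |X N ω - X M ω|} ∪ {ω | X M ω < -C₀ * (M:ℝ) ^ a}) :=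
            measure_mono hsub
        _ ≤ P {ω | lam / 2 < |X N ω - X M ω|} + P {ω | X M ω < -C₀ * (M:ℝ) ^ a} :=
            measure_union_le _ _
        _ = P {ω | lam / 2 < |X N ω - X M ω|} := by rw [hnull, add_zero]
        _ ≤ ENNReal.ofReal (C * Real.exp (-c * (M:ℝ) ^ b * (lam / 2) ^ ((1:ℝ) / 2))) :=
            htail M N hM1 hMN (lam / 2) (by linarith)
        _ ≤ ENNReal.ofReal (C * Real.exp (-(c₂ * lam ^ θ))) := by
            apply ENNReal.ofReal_le_ofReal
            apply mul_le_mul_of_nonneg_left _ hC.le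
            apply Real.exp_le_exp.mpr
            linarith [key]
    · push_neg at hMN
      have hNs : (N:ℝ) < s := lt_of_lt_of_le (by exact_mod_cast hMN) hMs
      have hCN : C₀ * (N:ℝ) ^ a < lam := by
        have h1 : (N:ℝ) ^ a ≤ s ^ a := Real.rpow_le_rpow (Nat.cast_nonneg N) hNs.le ha.le
        rw [hsa] at h1
        have h2 : C₀ * (lam / (2 * C₀)) = lam / 2 := by field_simp
        nlinarith
      have hnull : P {ω | lam < -X N ω} = 0 := by
        have h := hlow N hN
        rw [ae_iff] at h
        apply measure_mono_null _ h
        intro ω hω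
        simp only [Set.mem_setOf_eq, not_le] at hω ⊢
        nlinarith
      rw [hnull]
      exact zero_le
  -- choice of the threshold k₀
  set K₁ : ℝ := ((r + 1) / c₂) ^ (θ - 1)⁻¹ with hK₁def
  set k₀ : ℕ := ⌈max A₀ (max 1 K₁)⌉₊ with hk₀def
  have hk₀A : A₀ ≤ (k₀:ℝ) := le_trans (le_max_left _ _) (Nat.le_ceil _)
  have hk₀1 : (1:ℝ) ≤ (k₀:ℝ) :=
    le_trans (le_trans (le_max_left _ _) (le_max_right _ _)) (Nat.le_ceil _)
  have hk₀K : K₁ ≤ (k₀:ℝ) :=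
    le_trans (le_trans (le_max_right _ _) (le_max_right _ _)) (Nat.le_ceil _)
  have hgrow : ∀ x : ℝ, (k₀:ℝ) ≤ x → (r + 1) * x ≤ c₂ * x ^ θ := by
    intro x hx
    have hx1 : (1:ℝ) ≤ x := le_trans hk₀1 hx
    have hx0 : (0:ℝ) < x := by linarith
    have h1 : (r + 1) / c₂ ≤ x ^ (θ - 1) := by
      have hKx : K₁ ≤ x := le_trans hk₀K hx
      have e : K₁ ^ (θ - 1) = (r + 1) / c₂ := by
        rw [hK₁def, ← Real.rpow_mul (by positivity),
          inv_mul_cancel₀ (by linarith : θ - 1 ≠ 0), Real.rpow_one]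
      calc (r + 1) / c₂ = K₁ ^ (θ - 1) := e.symm
        _ ≤ x ^ (θ - 1) := Real.rpow_le_rpow (by rw [hK₁def]; positivity) hKx (by linarith)
    have e2 : x ^ θ = x ^ (θ - 1) * x := by
      nth_rewrite 1 [show θ = (θ - 1) + 1 by ring]
      rw [Real.rpow_add hx0, Real.rpow_one]
    rw [e2]
    have h2 : (r + 1) / c₂ * x ≤ x ^ (θ - 1) * x := mul_le_mul_of_nonneg_right h1 hx0.le
    have h3 : c₂ * ((r + 1) / c₂ * x) ≤ c₂ * (x ^ (θ - 1) * x) :=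
      mul_le_mul_of_nonneg_left h2 hc₂.le
    have h4 : c₂ * ((r + 1) / c₂ * x) = (r + 1) * x := by field_simp
    linarith
  set q : ℝ≥0∞ := ENNReal.ofReal (Real.exp (-1)) with hqdef
  refine ⟨ENNReal.ofReal (Real.exp (r * (k₀:ℝ)))
    + ENNReal.ofReal (C * Real.exp r) * (1 - q)⁻¹, ?_, ?_⟩
  · have hq1 : q < 1 := by
      rw [hqdef]
      exact ENNReal.ofReal_lt_one.mpr (Real.exp_lt_one_iff.mpr (by norm_num))
    have h1q : (1 - q) ≠ 0 := by
      rw [Ne, tsub_eq_zero_iff_le]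
      exact not_le.mpr hq1
    exact ENNReal.add_ne_top.mpr ⟨ENNReal.ofReal_ne_top,
      ENNReal.mul_ne_top ENNReal.ofReal_ne_top (ENNReal.inv_ne_top.mpr h1q)⟩
  · intro N hN
    set S : ℕ → Set Ω := fun j => {ω | ((k₀:ℝ) + j) < -X N ω} with hSdef
    have hSm : ∀ j, MeasurableSet (S j) := fun j =>
      measurableSet_lt measurable_const (hX N).neg
    set f : ℕ → Ω → ℝ≥0∞ := fun j =>
      (S j).indicator (fun _ => ENNReal.ofReal (Real.exp (r * ((k₀:ℝ) + j + 1)))) with hfdef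
    have hpt : ∀ ω, ENNReal.ofReal (Real.exp (-r * X N ω))
        ≤ ENNReal.ofReal (Real.exp (r * (k₀:ℝ))) + ∑' j, f j ω := by
      intro ω
      by_cases h : -X N ω ≤ (k₀:ℝ)
      · refine le_trans ?_ le_self_add
        apply ENNReal.ofReal_le_ofReal
        apply Real.exp_le_exp.mpr
        nlinarith
      · push_neg at h
        set y : ℝ := -X N ω with hydef
        have hy0 : (0:ℝ) < y := by linarith
        have hk : k₀ < ⌈y⌉₊ := Nat.lt_ceil.mpr h
        set j : ℕ := ⌈y⌉₊ - 1 - k₀ with hjdef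
        have h1 : k₀ + j + 1 = ⌈y⌉₊ := by omega
        have hj : (k₀:ℝ) + j = (⌈y⌉₊:ℝ) - 1 := by
          have := congrArg (fun n : ℕ => (n:ℝ)) h1
          push_cast at this
          linarith
        have hlt : (k₀:ℝ) + j < y := by
          have := Nat.ceil_lt_add_one hy0.le
          linarith
        have hle : y ≤ (k₀:ℝ) + j + 1 := by
          have := Nat.le_ceil y
          linarith
        have hmem : ω ∈ S j := hlt
        calc ENNReal.ofReal (Real.exp (-r * X N ω))
            ≤ ENNReal.ofReal (Real.exp (r * ((k₀:ℝ) + j + 1))) := by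
              apply ENNReal.ofReal_le_ofReal
              apply Real.exp_le_exp.mpr
              have hy' : -r * X N ω = r * y := by rw [hydef]; ring
              rw [hy']
              exact mul_le_mul_of_nonneg_left hle hr0.le
          _ = f j ω := by rw [hfdef]; simp [Set.indicator_of_mem hmem]
          _ ≤ ∑' i, f i ω := ENNReal.le_tsum j
          _ ≤ _ := le_add_self
    calc ∫⁻ ω, ENNReal.ofReal (Real.exp (-r * X N ω)) ∂P
        ≤ ∫⁻ ω, (ENNReal.ofReal (Real.exp (r * (k₀:ℝ))) + ∑' j, f j ω) ∂P :=
          lintegral_mono hpt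
      _ = ENNReal.ofReal (Real.exp (r * (k₀:ℝ))) + ∑' j, ∫⁻ ω, f j ω ∂P := by
          rw [lintegral_add_left measurable_const, lintegral_const, measure_univ, mul_one,
            lintegral_tsum (fun j => (measurable_const.indicator (hSm j)).aemeasurable)]
      _ = ENNReal.ofReal (Real.exp (r * (k₀:ℝ)))
          + ∑' j : ℕ, ENNReal.ofReal (Real.exp (r * ((k₀:ℝ) + (j:ℝ) + 1))) * P (S j) := by
          congr 1
          apply tsum_congr
          intro j
          rw [hfdef]
          exact lintegral_indicator_const (hSm j) _
      _ ≤ ENNReal.ofReal (Real.exp (r * (k₀:ℝ)))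
          + ∑' j, ENNReal.ofReal (C * Real.exp r) * q ^ j := by
          apply add_le_add le_rfl
          apply ENNReal.tsum_le_tsum
          intro j
          have hjn : (0:ℝ) ≤ (j:ℝ) := Nat.cast_nonneg j
          have hA : A₀ ≤ (k₀:ℝ) + j := by linarith
          have hP := tail N hN ((k₀:ℝ) + j) hA
          have hg := hgrow ((k₀:ℝ) + j) (by linarith)
          calc ENNReal.ofReal (Real.exp (r * ((k₀:ℝ) + j + 1))) * P (S j)
              ≤ ENNReal.ofReal (Real.exp (r * ((k₀:ℝ) + j + 1)))
                * ENNReal.ofReal (C * Real.exp (-(c₂ * ((k₀:ℝ) + j) ^ θ))) :=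
                mul_le_mul_right hP _
            _ ≤ ENNReal.ofReal (Real.exp (r * ((k₀:ℝ) + j + 1)))
                * ENNReal.ofReal (C * Real.exp (-((r + 1) * ((k₀:ℝ) + j)))) := by
                apply mul_le_mul_right
                apply ENNReal.ofReal_le_ofReal
                exact mul_le_mul_of_nonneg_left (Real.exp_le_exp.mpr (by linarith)) hC.le
            _ = ENNReal.ofReal (Real.exp (r * ((k₀:ℝ) + j + 1))
                * (C * Real.exp (-((r + 1) * ((k₀:ℝ) + j))))) :=
                (ENNReal.ofReal_mul (Real.exp_pos _).le).symm
            _ ≤ ENNReal.ofReal (C * Real.exp r * Real.exp (-(1:ℝ)) ^ j) := by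
                apply ENNReal.ofReal_le_ofReal
                have e1 : Real.exp (r * ((k₀:ℝ) + j + 1))
                    * (C * Real.exp (-((r + 1) * ((k₀:ℝ) + j))))
                    = C * Real.exp (r * ((k₀:ℝ) + j + 1) + -((r + 1) * ((k₀:ℝ) + j))) := by
                  rw [Real.exp_add]; ring
                have e2 : C * Real.exp r * Real.exp (-(1:ℝ)) ^ j
                    = C * Real.exp (r + (j:ℝ) * (-1)) := by
                  rw [← Real.exp_nat_mul, mul_assoc, ← Real.exp_add]
                rw [e1, e2]
                apply mul_le_mul_of_nonneg_left _ hC.le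
                apply Real.exp_le_exp.mpr
                have e3 : r * ((k₀:ℝ) + j + 1) + -((r + 1) * ((k₀:ℝ) + j))
                    = r - (k₀:ℝ) - j := by ring
                rw [e3]
                have hk0 : (0:ℝ) ≤ (k₀:ℝ) := Nat.cast_nonneg k₀
                linarith
            _ = ENNReal.ofReal (C * Real.exp r) * q ^ j := by
                rw [ENNReal.ofReal_mul (by positivity),
                  ENNReal.ofReal_pow (Real.exp_pos _).le, hqdef]
      _ = ENNReal.ofReal (Real.exp (r * (k₀:ℝ)))
          + ENNReal.ofReal (C * Real.exp r) * (1 - q)⁻¹ := by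
          rw [ENNReal.tsum_mul_left, ENNReal.tsum_geometric]
end
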